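/- Let {A_q : q ∈ ℤ≥0} be a family of subsets of [0,∞) such that A_q is a q-nebula for every q ∈ ℤ≥0. Then the intersection ⋂_{q∈ℤ≥0} A_q is a closed, totally disconnected subset of [0,∞) containing 0. -/
import Mathlib


open Set

/-- A closed subset `A` of `[0,∞)` is a `q`-nebula if it is a disjoint union of closed
intervals `I 0, …, I k` with `0 ∈ I 0`, the intervals `I 0, …, I (k-1)` compact of diameter
`< 2^{-q}`, and `I k` an unbounded closed interval contained in `(q, ∞)`. -/
def IsNebula (q : ℕ) (A : Set ℝ) : Prop :=
  IsClosed A ∧ A ⊆ Set.Ici 0 ∧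
  ∃ (k : ℕ) (I : Fin (k + 1) → Set ℝ),
    A = ⋃ i, I i ∧
    (0 : ℝ) ∈ I 0 ∧
    (∀ i : Fin (k + 1), (i : ℕ) < k →
      ∃ a b : ℝ, a ≤ b ∧ I i = Set.Icc a b ∧ b - a < (2 : ℝ) ^ (-(q : ℤ))) ∧
    (∃ a : ℝ, I (Fin.last k) = Set.Ici a ∧ (q : ℝ) < a) ∧
    Pairwise (Function.onFun Disjoint I)

/-- Lemma 2.11: the intersection of a family `{A q}` where each `A q` is a `q`-nebula is a
closed, totally disconnected subset of `[0,∞)` containing `0`. -/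
theorem iInter_nebula_closed_totallyDisconnected
    (A : ℕ → Set ℝ) (hA : ∀ q : ℕ, IsNebula q (A q)) :
    IsClosed (⋂ q, A q) ∧ IsTotallyDisconnected (⋂ q, A q) ∧
    (⋂ q, A q) ⊆ Set.Ici 0 ∧ (0 : ℝ) ∈ ⋂ q, A q := by
  have h0 : ∀ q, (0:ℝ) ∈ A q := by
    intro q
    obtain ⟨_, _, k, I, hAeq, h0I, _, _, _⟩ := hA q
    rw [hAeq]; exact mem_iUnion.2 ⟨0, h0I⟩
  refine ⟨isClosed_iInter fun q => (hA q).1, ?_,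
    (iInter_subset A 0).trans (hA 0).2.1, mem_iInter.2 h0⟩
  intro S hS hSconn x hx y hy
  by_contra hne
  have key : ∀ x y : ℝ, x ∈ S → y ∈ S → x < y → False := ?_
  · rcases lt_trichotomy x y with h | h | h
    · exact key x y hx hy h
    · exact hne h
    · exact key y x hy hx h
  clear hne hx hy x y
  intro x y hx hy hxy
  obtain ⟨n, hn⟩ : ∃ n : ℕ, (1/2:ℝ)^n < y - x :=
    exists_pow_lt_of_lt_one (by linarith) (by norm_num)
  set q := max n ⌈y⌉₊ with hq
  have hqy : y ≤ (q:ℝ) := le_trans (Nat.le_ceil y) (Nat.cast_le.2 (le_max_right _ _))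
  have hpow : (2:ℝ) ^ (-(q:ℤ)) < y - x := by
    calc (2:ℝ)^(-(q:ℤ)) = (1/2:ℝ)^q := by
          rw [zpow_neg, zpow_natCast, ← inv_pow]; norm_num
    _ ≤ (1/2:ℝ)^n := pow_le_pow_of_le_one (by norm_num) (by norm_num) (le_max_left _ _)
    _ < y - x := hn
  obtain ⟨hclosed, hsub, k, I, hAeq, h0I, hcompact, ⟨a, hlast, hqa⟩, hdisj⟩ := hA q
  have hIclosed : ∀ i, IsClosed (I i) := by
    intro i
    rcases lt_or_eq_of_le (Nat.lt_succ_iff.1 i.2) with h | h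
    · obtain ⟨c, d, _, hI, _⟩ := hcompact i h
      rw [hI]; exact isClosed_Icc
    · have : i = Fin.last k := Fin.ext h
      rw [this, hlast]; exact isClosed_Ici
  have hTsub : Icc x y ⊆ A q := by
    have hSA : S ⊆ A q := hS.trans (iInter_subset A q)
    exact (hSconn.ordConnected.out hx hy).trans hSA
  have hxA : x ∈ A q := hTsub ⟨le_refl x, le_of_lt hxy⟩
  obtain ⟨i, hxI⟩ : ∃ i, x ∈ I i := by
    rw [hAeq] at hxA; exact mem_iUnion.1 hxA
  -- V := union of other intervals
  set V : Set ℝ := ⋃ j ∈ ({i}ᶜ : Set (Fin (k+1))), I j with hV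
  have hVclosed : IsClosed V :=
    Set.Finite.isClosed_biUnion (Set.toFinite _) (fun j _ => hIclosed j)
  have hUV : Disjoint (I i) V := by
    rw [hV, disjoint_iUnion₂_right]
    intro j hj
    exact hdisj (Ne.symm hj)
  have hcover : Icc x y ⊆ Vᶜ ∪ (I i)ᶜ := by
    intro z hz
    have : z ∈ A q := hTsub hz
    rw [hAeq] at this
    obtain ⟨j, hj⟩ := mem_iUnion.1 this
    by_cases hji : j = i
    · left
      exact fun hzV => (hUV.ne_of_mem (hji ▸ hj) hzV) rfl
    · right
      have hzV : z ∈ V := mem_biUnion hji hj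
      exact fun hzU => (hUV.ne_of_mem hzU hzV) rfl
  have hTU : Icc x y ⊆ I i := by
    by_contra hcon
    obtain ⟨z, hzT, hzU⟩ := not_subset.1 hcon
    have hne1 : (Icc x y ∩ Vᶜ).Nonempty :=
      ⟨x, ⟨le_refl x, le_of_lt hxy⟩, fun hxV => (hUV.ne_of_mem hxI hxV) rfl⟩
    have hne2 : (Icc x y ∩ (I i)ᶜ).Nonempty := ⟨z, hzT, hzU⟩
    obtain ⟨w, hwT, hw1, hw2⟩ := isPreconnected_Icc _ _ hVclosed.isOpen_compl
      (hIclosed i).isOpen_compl hcover hne1 hne2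
    have : w ∈ A q := hTsub hwT
    rw [hAeq] at this
    obtain ⟨j, hj⟩ := mem_iUnion.1 this
    by_cases hji : j = i
    · exact hw2 (hji ▸ hj)
    · exact hw1 (mem_biUnion hji hj)
  have hyI : y ∈ I i := hTU ⟨le_of_lt hxy, le_refl y⟩
  rcases lt_or_eq_of_le (Nat.lt_succ_iff.1 i.2) with h | h
  · obtain ⟨c, d, _, hI, hd⟩ := hcompact i h
    rw [hI] at hxI hyI
    have : y - x ≤ d - c := by
      have := hxI.1; have := hyI.2; linarith
    linarith
  · have : i = Fin.last k := Fin.ext h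
    rw [this, hlast] at hyI
    have : y ≥ a := hyI
    linarith
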